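/- For a distributive lattice L, the map sending (a,b,c) to its balanced closure (a ∨ (b∧c), b ∨ (a∧c), c ∨ (a∧b)) is a closure operator on L³: it is monotone, extensive, and idempotent. -/
import Mathlib

/-- The balanced-closure map on triples of a lattice. -/
def balancedClosure {L : Type*} [Lattice L] (t : L × L × L) : L × L × L :=
  (t.1 ⊔ t.2.1 ⊓ t.2.2, t.2.1 ⊔ t.1 ⊓ t.2.2, t.2.2 ⊔ t.1 ⊓ t.2.1)

private lemma aux {L : Type*} [DistribLattice L] (x y z : L) :
    (y ⊔ x ⊓ z) ⊓ (z ⊔ x ⊓ y) ≤ x ⊔ y ⊓ z := by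
  rw [inf_sup_right]
  refine sup_le ?_ (le_sup_left.trans' (inf_le_left.trans inf_le_left))
  rw [inf_sup_left]
  exact sup_le le_sup_right (le_sup_left.trans' (inf_le_right.trans inf_le_left))

theorem stmt1 {L : Type*} [DistribLattice L] :
    Monotone (balancedClosure (L := L)) ∧
    (∀ t : L × L × L, t ≤ balancedClosure t) ∧
    (∀ t : L × L × L, balancedClosure (balancedClosure t) = balancedClosure t) := by
  refine ⟨?_, ?_, ?_⟩
  · rintro ⟨a,b,c⟩ ⟨a',b',c'⟩ ⟨h1,h2,h3⟩
    exact ⟨sup_le_sup h1 (inf_le_inf h2 h3), sup_le_sup h2 (inf_le_inf h1 h3),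
      sup_le_sup h3 (inf_le_inf h1 h2)⟩
  · rintro ⟨a,b,c⟩
    exact ⟨le_sup_left, le_sup_left, le_sup_left⟩
  · rintro ⟨a,b,c⟩
    simp only [balancedClosure, Prod.mk.injEq]
    refine ⟨sup_eq_left.2 ?_, sup_eq_left.2 ?_, sup_eq_left.2 ?_⟩
    · exact aux a b c
    · have := aux b a c
      rwa [inf_comm b a] at this
    · have := aux c a b
      rwa [inf_comm c a, inf_comm c b] at this
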